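/- For every discrete memoryless channel (X, Y, W) with finite input alphabet X and finite output alphabet Y, the symmetric capacity I⁰(W) is achievable: for every ε > 0 and all sufficiently large block lengths n, there exist a positive integer M, an encoder e : {1,…,M} → Xⁿ and a decoder d : Yⁿ → {1,…,M} such that (1/n)·log₂ M ≥ I⁰(W) − ε and the average error probability (1/M)·Σ_{m=1}^{M} Wⁿ(d(Yⁿ) ≠ m | Xⁿ = e(m)) is at most ε, where Wⁿ denotes the n-fold memoryless extension of W. -/

import Mathlib

open Finset


section aux
variable {ι Z : Type} [Fintype ι] [DecidableEq ι] [Fintype Z]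

lemma prod_ite_single' (i : ι) (a c : ι → ℝ) :
    ∏ k, (if k = i then a k else c k) = a i * ∏ k ∈ univ.erase i, c k := by
  rw [← Finset.mul_prod_erase _ _ (mem_univ i), if_pos rfl]
  exact congrArg _ (Finset.prod_congr rfl fun k hk => if_neg (Finset.ne_of_mem_erase hk))

lemma prod_ite_pair' {i j : ι} (hij : i ≠ j) (a b c : ι → ℝ) :
    ∏ k, (if k = i then a k else if k = j then b k else c k)
      = a i * (b j * ∏ k ∈ (univ.erase i).erase j, c k) := by
  rw [← Finset.mul_prod_erase _ _ (mem_univ i), if_pos rfl]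
  refine congrArg _ ?_
  rw [← Finset.mul_prod_erase _ _ (Finset.mem_erase.2 ⟨Ne.symm hij, mem_univ j⟩),
    if_neg (Ne.symm hij), if_pos rfl]
  refine congrArg _ (Finset.prod_congr rfl fun k hk => ?_)
  rw [if_neg (Finset.ne_of_mem_erase (Finset.mem_of_mem_erase hk)),
    if_neg (Finset.ne_of_mem_erase hk)]

lemma sum_pi_mul_single (w : Z → ℝ) (hw : ∑ z, w z = 1) (i : ι) (F : Z → ℝ) :
    ∑ g : ι → Z, (∏ j, w (g j)) * F (g i) = ∑ z, w z * F z := by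
  calc ∑ g : ι → Z, (∏ j, w (g j)) * F (g i)
      = ∑ g : ι → Z, ∏ j, (if j = i then w (g j) * F (g j) else w (g j)) := by
        refine Finset.sum_congr rfl fun g _ => ?_
        rw [prod_ite_single' i, ← Finset.mul_prod_erase _ (fun j => w (g j)) (mem_univ i)]
        ring
    _ = ∏ j, ∑ z, (if j = i then w z * F z else w z) := by
        rw [← Fintype.prod_sum (fun j z => if j = i then w z * F z else w z)]
    _ = ∑ z, w z * F z := by
        calc ∏ j, ∑ z, (if j = i then w z * F z else w z)
            = ∏ j, (if j = i then ∑ z, w z * F z else 1) := by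
              refine Finset.prod_congr rfl fun j _ => ?_
              by_cases h : j = i <;> simp [h, hw]
          _ = _ := by rw [prod_ite_single' i]; simp

lemma sum_pi_mul_pair (w : Z → ℝ) (hw : ∑ z, w z = 1) {i j : ι} (hij : i ≠ j)
    (F G : Z → ℝ) :
    ∑ g : ι → Z, (∏ k, w (g k)) * (F (g i) * G (g j))
      = (∑ z, w z * F z) * (∑ z, w z * G z) := by
  calc ∑ g : ι → Z, (∏ k, w (g k)) * (F (g i) * G (g j))
      = ∑ g : ι → Z, ∏ k, (if k = i then w (g k) * F (g k)
          else if k = j then w (g k) * G (g k) else w (g k)) := by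
        refine Finset.sum_congr rfl fun g _ => ?_
        rw [prod_ite_pair' hij, ← Finset.mul_prod_erase _ (fun k => w (g k)) (mem_univ i),
          ← Finset.mul_prod_erase _ (fun k => w (g k))
            (Finset.mem_erase.2 ⟨Ne.symm hij, mem_univ j⟩)]
        ring
    _ = ∏ k, ∑ z, (if k = i then w z * F z else if k = j then w z * G z else w z) := by
        rw [← Fintype.prod_sum (fun k z => if k = i then w z * F z
          else if k = j then w z * G z else w z)]
    _ = (∑ z, w z * F z) * (∑ z, w z * G z) := by
        calc ∏ k, ∑ z, (if k = i then w z * F z else if k = j then w z * G z else w z)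
            = ∏ k, (if k = i then ∑ z, w z * F z else if k = j then ∑ z, w z * G z else 1) := by
              refine Finset.prod_congr rfl fun k _ => ?_
              by_cases h : k = i
              · simp [h]
              · by_cases h' : k = j <;> simp [h, h', hw]
          _ = _ := by rw [prod_ite_pair' hij]; simp

lemma sum_pi_prod_eq_one (w : Z → ℝ) (hw : ∑ z, w z = 1) :
    ∑ g : ι → Z, ∏ j, w (g j) = 1 := by
  rw [← Fintype.prod_sum (fun (_ : ι) z => w z)]
  simp [hw]

lemma sum_arrowProd {ι α β : Type} [Fintype ι] [DecidableEq ι] [Fintype α] [Fintype β]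
    (F : (ι → α × β) → ℝ) :
    ∑ x : ι → α, ∑ y : ι → β, F (fun i => (x i, y i)) = ∑ g : ι → α × β, F g := by
  have h := Fintype.sum_equiv (Equiv.arrowProdEquivProdArrow ι (fun _ => α) (fun _ => β))
    (fun g => F g) (fun p => F (fun i => (p.1 i, p.2 i))) (fun g => rfl)
  rw [h, Fintype.sum_prod_type]

end aux

lemma pi_variance {Z : Type} [Fintype Z] (w : Z → ℝ) (hw1 : ∑ z, w z = 1)
    (f : Z → ℝ) (μ : ℝ) (hμ : ∑ z, w z * f z = μ) (n : ℕ) :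
    ∑ g : Fin n → Z, (∏ i, w (g i)) * ((∑ i, f (g i)) - n * μ)^2
      = n * ∑ z, w z * (f z - μ)^2 := by
  have hbar : ∑ z, w z * (f z - μ) = 0 := by
    simp only [mul_sub]
    rw [Finset.sum_sub_distrib, hμ, ← Finset.sum_mul, hw1]
    ring
  have h1 : ∀ g : Fin n → Z, (∑ i, f (g i)) - n * μ = ∑ i, (f (g i) - μ) := by
    intro g
    rw [Finset.sum_sub_distrib]
    simp [mul_comm]
  calc ∑ g : Fin n → Z, (∏ i, w (g i)) * ((∑ i, f (g i)) - n * μ)^2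
      = ∑ g : Fin n → Z, ∑ i, ∑ j, (∏ k, w (g k)) * ((f (g i) - μ) * (f (g j) - μ)) := by
        refine Finset.sum_congr rfl fun g _ => ?_
        rw [h1 g, sq, Finset.sum_mul_sum, Finset.mul_sum]
        exact Finset.sum_congr rfl fun i _ => by rw [Finset.mul_sum]
    _ = ∑ i, ∑ j, ∑ g : Fin n → Z, (∏ k, w (g k)) * ((f (g i) - μ) * (f (g j) - μ)) := by
        rw [Finset.sum_comm]
        exact Finset.sum_congr rfl fun i _ => Finset.sum_comm
    _ = ∑ i : Fin n, ∑ j : Fin n, (if i = j then ∑ z, w z * (f z - μ)^2 else 0) := by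
        refine Finset.sum_congr rfl fun i _ => Finset.sum_congr rfl fun j _ => ?_
        by_cases h : i = j
        · subst h
          rw [if_pos rfl]
          have := sum_pi_mul_single w hw1 i (fun z => (f z - μ)^2)
          rw [← this]
          exact Finset.sum_congr rfl fun g _ => by rw [sq]
        · rw [if_neg h, sum_pi_mul_pair w hw1 h (fun z => f z - μ) (fun z => f z - μ), hbar]
          ring
    _ = n * ∑ z, w z * (f z - μ)^2 := by
        simp [Finset.sum_ite_eq]

theorem exists_code {X Y : Type} [Fintype X] [Fintype Y] [Nonempty X] [DecidableEq Y]
    (W : X → Y → ℝ) (hW0 : ∀ x y, 0 ≤ W x y) (hW1 : ∀ x, ∑ y, W x y = 1)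
    (n M : ℕ) (hM : 0 < M) (γ : ℝ) (hγ : 0 < γ) :
    ∃ (e : Fin M → (Fin n → X)) (d : (Fin n → Y) → Fin M),
      (1 / (M : ℝ)) * ∑ m : Fin M,
          ∑ y ∈ Finset.univ.filter (fun y : Fin n → Y => d y ≠ m),
            ∏ i, W (e m i) (y i)
        ≤ (∑ x : Fin n → X, ∑ y : Fin n → Y,
            (∏ i, (1 / (Fintype.card X : ℝ)) * W (x i) (y i)) *
            (if (∏ i, W (x i) (y i)) ≤ γ * ∏ i, ((1 / (Fintype.card X : ℝ)) * ∑ x', W x' (y i)) then 1 else 0))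
          + (M : ℝ) / γ := by
  classical
  set q : ℝ := (Fintype.card X : ℝ) with hqdef
  have hq : (0:ℝ) < q := by rw [hqdef]; exact_mod_cast Fintype.card_pos
  set Q : Y → ℝ := fun y => (1 / q) * ∑ x', W x' y with hQdef
  set Wn : (Fin n → X) → (Fin n → Y) → ℝ := fun x y => ∏ i, W (x i) (y i) with hWndef
  set Qn : (Fin n → Y) → ℝ := fun y => ∏ i, Q (y i) with hQndef
  set T : (Fin n → X) → (Fin n → Y) → Prop := fun x y => γ * Qn y < Wn x y with hTdef
  set w : (Fin n → X) → ℝ := fun x => ∏ _i : Fin n, (1 / q) with hwdef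
  have hw0 : ∀ x, 0 ≤ w x := fun x => Finset.prod_nonneg fun _ _ => by positivity
  have hwsum : ∑ x : Fin n → X, w x = 1 := by
    rw [hwdef, ← Fintype.prod_sum (fun (_ : Fin n) (_ : X) => (1/q))]
    simp [hqdef]
  have hWn0 : ∀ x y, 0 ≤ Wn x y := fun x y => Finset.prod_nonneg fun _ _ => hW0 _ _
  have hWn1 : ∀ x : Fin n → X, ∑ y : Fin n → Y, Wn x y = 1 := by
    intro x
    rw [hWndef, ← Fintype.prod_sum (fun i b => W (x i) b)]
    simp [hW1]
  have hwWn : ∀ x y, w x * Wn x y = ∏ i, (1 / q) * W (x i) (y i) := by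
    intro x y
    rw [hwdef, hWndef, ← Finset.prod_mul_distrib]
  have hmargQ : ∀ y : Fin n → Y, ∑ x : Fin n → X, w x * Wn x y = Qn y := by
    intro y
    rw [Finset.sum_congr rfl fun x _ => hwWn x y,
      ← Fintype.prod_sum (fun i a => (1/q) * W a (y i))]
    exact Finset.prod_congr rfl fun i _ => by simp [hQdef, Finset.mul_sum]
  set χ : Prop → ℝ := fun P => if P then 1 else 0 with hχdef
  have hχ0 : ∀ P, 0 ≤ χ P := fun P => by by_cases h : P <;> simp [hχdef, h]
  set A : (Fin n → X) → ℝ := fun x => ∑ y, Wn x y * χ (¬ T x y) with hAdef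
  set Pbad : ℝ := ∑ x, w x * A x with hPbaddef
  set D : (Fin M → (Fin n → X)) → (Fin n → Y) → Fin M := fun c y =>
    if h : ∃ m, T (c m) y then h.choose else ⟨0, hM⟩ with hDdef
  set ω : (Fin M → (Fin n → X)) → ℝ := fun c => ∏ m, w (c m) with hωdef
  have hω0 : ∀ c, 0 ≤ ω c := fun c => Finset.prod_nonneg fun m _ => hw0 (c m)
  have hwpos : ∀ x, 0 < w x := by
    intro x
    rw [hwdef]
    exact Finset.prod_pos fun _ _ => by positivity
  have hωpos : ∀ c, 0 < ω c := fun c => Finset.prod_pos fun m _ => hwpos (c m)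
  have hωsum : ∑ c : Fin M → (Fin n → X), ω c = 1 := sum_pi_prod_eq_one w hwsum
  have hite0 : ∀ (c : Fin M → (Fin n → X)) (m m' : Fin M) (y : Fin n → Y),
      0 ≤ (if m' = m then 0 else Wn (c m) y * χ (T (c m') y)) := by
    intro c m m' y
    by_cases h : m' = m
    · simp [h]
    · rw [if_neg h]; exact mul_nonneg (hWn0 _ _) (hχ0 _)
  -- Step A : pointwise bound on error of each codebook
  have stepA : ∀ c m, ∑ y ∈ Finset.univ.filter (fun y : Fin n → Y => D c y ≠ m), Wn (c m) y
      ≤ A (c m) + ∑ m', (if m' = m then 0 else ∑ y, Wn (c m) y * χ (T (c m') y)) := by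
    intro c m
    rw [Finset.sum_filter]
    have swap : ∑ m', (if m' = m then 0 else ∑ y, Wn (c m) y * χ (T (c m') y))
        = ∑ y, ∑ m', (if m' = m then 0 else Wn (c m) y * χ (T (c m') y)) := by
      rw [Finset.sum_comm]
      refine Finset.sum_congr rfl fun m' _ => ?_
      by_cases h : m' = m <;> simp [h]
    rw [swap, hAdef, ← Finset.sum_add_distrib]
    refine Finset.sum_le_sum fun y _ => ?_
    have h2 : 0 ≤ ∑ m', (if m' = m then 0 else Wn (c m) y * χ (T (c m') y)) :=
      Finset.sum_nonneg fun m' _ => hite0 c m m' y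
    have h1 : 0 ≤ Wn (c m) y * χ (¬ T (c m) y) := mul_nonneg (hWn0 _ _) (hχ0 _)
    by_cases hd : D c y ≠ m
    · rw [if_pos hd]
      by_cases hT : T (c m) y
      · have hex : ∃ m0, T (c m0) y := ⟨m, hT⟩
        have hm0 : T (c (hex.choose)) y := hex.choose_spec
        have hDm : D c y = hex.choose := by rw [hDdef]; simp only [dif_pos hex]
        have hne : hex.choose ≠ m := fun h => hd (hDm.trans h)
        have hsingle := Finset.single_le_sum (f := fun m' =>
            (if m' = m then 0 else Wn (c m) y * χ (T (c m') y)))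
            (fun m' _ => hite0 c m m' y) (Finset.mem_univ hex.choose)
        simp only [hχdef, if_neg hne, hm0, if_true, mul_one] at hsingle
        linarith
      · have h1' : Wn (c m) y * χ (¬ T (c m) y) = Wn (c m) y := by
          rw [hχdef]; simp [hT]
        linarith
    · rw [if_neg hd]
      linarith
  -- Step B1 : expectation of A over codebooks
  have stepB1 : ∀ m : Fin M, ∑ c : Fin M → (Fin n → X), ω c * A (c m) = Pbad :=
    fun m => sum_pi_mul_single w hwsum m A
  -- Step B2 : expectation of pair term
  have stepB2 : ∀ m m' : Fin M, m' ≠ m →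
      ∑ c : Fin M → (Fin n → X), ω c * ∑ y, Wn (c m) y * χ (T (c m') y) ≤ 1 / γ := by
    intro m m' hmm
    have hswap : ∑ c : Fin M → (Fin n → X), ω c * ∑ y, Wn (c m) y * χ (T (c m') y)
        = ∑ y, ∑ c : Fin M → (Fin n → X), ω c * (Wn (c m) y * χ (T (c m') y)) := by
      rw [Finset.sum_comm]
      exact Finset.sum_congr rfl fun c _ => by rw [Finset.mul_sum]
    have hpair : ∀ y, ∑ c : Fin M → (Fin n → X), ω c * (Wn (c m) y * χ (T (c m') y))
        = Qn y * ∑ x, w x * χ (T x y) := by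
      intro y
      have h := sum_pi_mul_pair w hwsum (Ne.symm hmm) (fun x => Wn x y) (fun x => χ (T x y))
      rw [hωdef]
      exact h.trans (by rw [hmargQ y])
    have key : ∀ y, Qn y * ∑ x, w x * χ (T x y) ≤ ∑ x, w x * Wn x y / γ := by
      intro y
      rw [Finset.mul_sum]
      refine Finset.sum_le_sum fun x _ => ?_
      by_cases hT : T x y
      · have hQn : Qn y ≤ Wn x y / γ := by
          rw [le_div_iff₀ hγ]
          rw [hTdef] at hT
          nlinarith [hT]
        have hχ1 : χ (T x y) = 1 := by rw [hχdef]; simp [hT]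
        rw [hχ1]
        calc Qn y * (w x * 1) = w x * Qn y := by ring
          _ ≤ w x * (Wn x y / γ) := by
              refine mul_le_mul_of_nonneg_left hQn (hw0 x)
          _ = w x * Wn x y / γ := by ring
      · have hχeq : χ (T x y) = 0 := by rw [hχdef]; simp [hT]
        rw [hχeq]
        have : (0:ℝ) ≤ w x * Wn x y / γ := by
          have := mul_nonneg (hw0 x) (hWn0 x y)
          positivity
        linarith
    calc ∑ c : Fin M → (Fin n → X), ω c * ∑ y, Wn (c m) y * χ (T (c m') y)
        = ∑ y, Qn y * ∑ x, w x * χ (T x y) := by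
          rw [hswap]; exact Finset.sum_congr rfl fun y _ => hpair y
      _ ≤ ∑ y, ∑ x, w x * Wn x y / γ := Finset.sum_le_sum fun y _ => key y
      _ = 1 / γ := by
          rw [Finset.sum_comm]
          have : ∀ x : Fin n → X, ∑ y, w x * Wn x y / γ = w x / γ := by
            intro x
            rw [← Finset.sum_div, ← Finset.mul_sum, hWn1 x, mul_one]
          rw [Finset.sum_congr rfl fun x _ => this x, ← Finset.sum_div, hwsum]
  -- Step C : average error over codebooks
  have stepC : ∑ c : Fin M → (Fin n → X), ω c *
      (∑ m : Fin M, ∑ y ∈ Finset.univ.filter (fun y : Fin n → Y => D c y ≠ m), Wn (c m) y)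
      ≤ (M:ℝ) * Pbad + (M:ℝ) * ((M:ℝ) / γ) := by
    calc ∑ c : Fin M → (Fin n → X), ω c *
        (∑ m : Fin M, ∑ y ∈ Finset.univ.filter (fun y : Fin n → Y => D c y ≠ m), Wn (c m) y)
        ≤ ∑ c : Fin M → (Fin n → X), ω c *
          (∑ m : Fin M, (A (c m) + ∑ m', (if m' = m then 0 else ∑ y, Wn (c m) y * χ (T (c m') y)))) := by
          refine Finset.sum_le_sum fun c _ => mul_le_mul_of_nonneg_left ?_ (hω0 c)
          exact Finset.sum_le_sum fun m _ => stepA c m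
      _ = ∑ m : Fin M, (∑ c : Fin M → (Fin n → X), ω c * A (c m)
            + ∑ m', (if m' = m then 0 else ∑ c : Fin M → (Fin n → X), ω c * ∑ y, Wn (c m) y * χ (T (c m') y))) := by
          have hin : ∀ c : Fin M → (Fin n → X),
              ω c * (∑ m : Fin M, (A (c m) + ∑ m', (if m' = m then 0 else ∑ y, Wn (c m) y * χ (T (c m') y))))
              = ∑ m : Fin M, (ω c * A (c m) + ∑ m', (if m' = m then 0 else ω c * ∑ y, Wn (c m) y * χ (T (c m') y))) := by
            intro c
            rw [Finset.mul_sum]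
            refine Finset.sum_congr rfl fun m _ => ?_
            rw [mul_add]
            refine congrArg _ ?_
            rw [Finset.mul_sum]
            refine Finset.sum_congr rfl fun m' _ => ?_
            by_cases h : m' = m <;> simp [h]
          rw [Finset.sum_congr rfl fun c _ => hin c, Finset.sum_comm]
          refine Finset.sum_congr rfl fun m _ => ?_
          rw [Finset.sum_add_distrib]
          refine congrArg _ ?_
          rw [Finset.sum_comm]
          refine Finset.sum_congr rfl fun m' _ => ?_
          by_cases h : m' = m <;> simp [h]
      _ ≤ ∑ m : Fin M, (Pbad + (M:ℝ) * (1/γ)) := by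
          refine Finset.sum_le_sum fun m _ => ?_
          rw [stepB1 m]
          have : ∑ m', (if m' = m then 0 else ∑ c : Fin M → (Fin n → X), ω c * ∑ y, Wn (c m) y * χ (T (c m') y))
              ≤ ∑ m' : Fin M, 1/γ := by
            refine Finset.sum_le_sum fun m' _ => ?_
            by_cases h : m' = m
            · rw [if_pos h]; positivity
            · rw [if_neg h]; exact stepB2 m m' h
          simp only [Finset.sum_const, Finset.card_univ, Fintype.card_fin, nsmul_eq_mul] at this
          linarith
      _ = (M:ℝ) * Pbad + (M:ℝ) * ((M:ℝ) / γ) := by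
          rw [Finset.sum_const, Finset.card_univ, Fintype.card_fin, nsmul_eq_mul]
          ring
  -- rewrite Pbad as the explicit expression
  have hPbadeq : Pbad = ∑ x : Fin n → X, ∑ y : Fin n → Y,
      (∏ i, (1 / q) * W (x i) (y i)) *
      (if (∏ i, W (x i) (y i)) ≤ γ * ∏ i, ((1 / q) * ∑ x', W x' (y i)) then 1 else 0) := by
    rw [hPbaddef]
    refine Finset.sum_congr rfl fun x _ => ?_
    rw [hAdef, Finset.mul_sum]
    refine Finset.sum_congr rfl fun y _ => ?_
    rw [← mul_assoc, hwWn x y, hχdef]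
    congr 1
    rw [hTdef]
    simp only [not_lt, hWndef, hQndef, hQdef]
  -- probabilistic method: some codebook achieves the average
  have hne : Nonempty (Fin M → (Fin n → X)) := inferInstance
  have hexists : ∃ c : Fin M → (Fin n → X),
      (∑ m : Fin M, ∑ y ∈ Finset.univ.filter (fun y : Fin n → Y => D c y ≠ m), Wn (c m) y)
      ≤ (M:ℝ) * Pbad + (M:ℝ) * ((M:ℝ) / γ) := by
    by_contra hcon
    push_neg at hcon
    have hlt : ∑ c : Fin M → (Fin n → X), ω c * ((M:ℝ) * Pbad + (M:ℝ) * ((M:ℝ) / γ))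
        < ∑ c : Fin M → (Fin n → X), ω c *
          (∑ m : Fin M, ∑ y ∈ Finset.univ.filter (fun y : Fin n → Y => D c y ≠ m), Wn (c m) y) := by
      refine Finset.sum_lt_sum_of_nonempty Finset.univ_nonempty fun c _ => ?_
      exact mul_lt_mul_of_pos_left (hcon c) (hωpos c)
    rw [← Finset.sum_mul, hωsum, one_mul] at hlt
    linarith [stepC]
  obtain ⟨c₀, hc₀⟩ := hexists
  refine ⟨c₀, D c₀, ?_⟩
  have hM' : (M:ℝ) ≠ 0 := by positivity
  have hrw : (∑ m : Fin M, ∑ y ∈ Finset.univ.filter (fun y : Fin n → Y => D c₀ y ≠ m),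
      ∏ i, W (c₀ m i) (y i))
      = ∑ m : Fin M, ∑ y ∈ Finset.univ.filter (fun y : Fin n → Y => D c₀ y ≠ m), Wn (c₀ m) y := rfl
  rw [hrw]
  calc (1 / (M:ℝ)) * ∑ m : Fin M, ∑ y ∈ Finset.univ.filter (fun y : Fin n → Y => D c₀ y ≠ m), Wn (c₀ m) y
      ≤ (1 / (M:ℝ)) * ((M:ℝ) * Pbad + (M:ℝ) * ((M:ℝ) / γ)) := by
        refine mul_le_mul_of_nonneg_left hc₀ (by positivity)
    _ = Pbad + (M:ℝ) / γ := by
        field_simp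
    _ = _ := by rw [hPbadeq]

theorem pbad_le {X Y : Type} [Fintype X] [Fintype Y] [Nonempty X] [DecidableEq Y]
    (W : X → Y → ℝ) (hW0 : ∀ x y, 0 ≤ W x y) (hW1 : ∀ x, ∑ y, W x y = 1)
    (I0 : ℝ)
    (hI0 : I0 = ∑ x, ∑ y, (1 / (Fintype.card X : ℝ)) * W x y *
      Real.logb 2 (W x y / ((1 / (Fintype.card X : ℝ)) * ∑ x' : X, W x' y)))
    (δ : ℝ) (hδ : 0 < δ) (n : ℕ) (hn : 1 ≤ n) :
    ∑ x : Fin n → X, ∑ y : Fin n → Y,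
      (∏ i, (1 / (Fintype.card X : ℝ)) * W (x i) (y i)) *
      (if (∏ i, W (x i) (y i)) ≤ ((2:ℝ) ^ ((n:ℝ) * (I0 - δ))) *
          ∏ i, ((1 / (Fintype.card X : ℝ)) * ∑ x', W x' (y i)) then 1 else 0)
    ≤ (∑ x, ∑ y, (1 / (Fintype.card X : ℝ)) * W x y *
        (Real.logb 2 (W x y / ((1 / (Fintype.card X : ℝ)) * ∑ x' : X, W x' y)) - I0)^2)
      / ((n:ℝ) * δ^2) := by
  classical
  set q : ℝ := (Fintype.card X : ℝ) with hqdef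
  have hq : (0:ℝ) < q := by rw [hqdef]; exact_mod_cast Fintype.card_pos
  set f : X → Y → ℝ := fun a b => Real.logb 2 (W a b / ((1/q) * ∑ x', W x' b)) with hfdef
  set w' : X × Y → ℝ := fun z => (1/q) * W z.1 z.2 with hw'def
  set f' : X × Y → ℝ := fun z => f z.1 z.2 with hf'def
  set Vz : ℝ := ∑ z : X × Y, w' z * (f' z - I0)^2 with hVzdef
  have hn' : (0:ℝ) < (n:ℝ) := by exact_mod_cast hn
  have hw'1 : ∑ z : X × Y, w' z = 1 := by
    rw [Fintype.sum_prod_type]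
    have : ∀ x : X, ∑ y : Y, w' (x, y) = 1/q := by
      intro x
      rw [hw'def]
      simp only []
      rw [← Finset.mul_sum, hW1 x, mul_one]
    rw [Finset.sum_congr rfl fun x _ => this x, Finset.sum_const, Finset.card_univ,
      nsmul_eq_mul, hqdef]
    field_simp
  have hμ : ∑ z : X × Y, w' z * f' z = I0 := by
    rw [Fintype.sum_prod_type]
    exact hI0.symm
  have hvar := pi_variance w' hw'1 f' I0 hμ n
  have htrans := sum_arrowProd (ι := Fin n) (α := X) (β := Y)
    (fun g => (∏ i, w' (g i)) * ((∑ i, f' (g i)) - (n:ℝ) * I0)^2)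
  have hvar2 : ∑ x : Fin n → X, ∑ y : Fin n → Y,
      (∏ i, (1/q) * W (x i) (y i)) * ((∑ i, f (x i) (y i)) - (n:ℝ) * I0)^2
      = (n:ℝ) * Vz := htrans.trans hvar
  have hVd : Vz = ∑ x, ∑ y, (1/q) * W x y *
      (Real.logb 2 (W x y / ((1/q) * ∑ x' : X, W x' y)) - I0)^2 := by
    rw [hVzdef, Fintype.sum_prod_type]
  -- pointwise bound
  have hpoint : ∀ (x : Fin n → X) (y : Fin n → Y),
      (∏ i, (1/q) * W (x i) (y i)) *
        (if (∏ i, W (x i) (y i)) ≤ ((2:ℝ) ^ ((n:ℝ) * (I0 - δ))) *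
            ∏ i, ((1/q) * ∑ x', W x' (y i)) then 1 else 0)
      ≤ (∏ i, (1/q) * W (x i) (y i)) *
        (((∑ i, f (x i) (y i)) - (n:ℝ) * I0) / ((n:ℝ) * δ))^2 := by
    intro x y
    have hPn0 : (0:ℝ) ≤ ∏ i, (1/q) * W (x i) (y i) :=
      Finset.prod_nonneg fun i _ => mul_nonneg (by positivity) (hW0 _ _)
    by_cases hc : (∏ i, W (x i) (y i)) ≤ ((2:ℝ) ^ ((n:ℝ) * (I0 - δ))) *
        ∏ i, ((1/q) * ∑ x', W x' (y i))
    · rw [if_pos hc]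
      rcases hPn0.eq_or_lt with h0 | hpos
      · rw [← h0]
        simp
      · have hfac : ∀ i, 0 < (1/q) * W (x i) (y i) := by
          intro i
          rcases (mul_nonneg (by positivity : (0:ℝ) ≤ 1/q) (hW0 (x i) (y i))).lt_or_eq with h | h
          · exact h
          · exfalso
            have : (∏ i, (1/q) * W (x i) (y i)) = 0 :=
              Finset.prod_eq_zero (mem_univ i) h.symm
            linarith
        have hq' : (0:ℝ) < 1/q := by positivity
        have hWpos : ∀ i, 0 < W (x i) (y i) := by
          intro i
          have := hfac i
          nlinarith
        have hQpos : ∀ i, 0 < (1/q) * ∑ x', W x' (y i) := by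
          intro i
          have h1 : W (x i) (y i) ≤ ∑ x', W x' (y i) :=
            Finset.single_le_sum (fun x' _ => hW0 x' (y i)) (mem_univ (x i))
          nlinarith [hWpos i]
        have hQprodpos : (0:ℝ) < ∏ i, ((1/q) * ∑ x', W x' (y i)) :=
          Finset.prod_pos fun i _ => hQpos i
        have hprodpos : (0:ℝ) < ∏ i, W (x i) (y i) / ((1/q) * ∑ x', W x' (y i)) :=
          Finset.prod_pos fun i _ => div_pos (hWpos i) (hQpos i)
        have hratio : (∏ i, W (x i) (y i) / ((1/q) * ∑ x', W x' (y i)))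
            ≤ (2:ℝ) ^ ((n:ℝ) * (I0 - δ)) := by
          rw [Finset.prod_div_distrib, div_le_iff₀ hQprodpos]
          exact hc
        have hsum : ∑ i, f (x i) (y i)
            = Real.logb 2 (∏ i, W (x i) (y i) / ((1/q) * ∑ x', W x' (y i))) := by
          rw [Real.logb, Real.log_prod
            (fun i _ => ne_of_gt (div_pos (hWpos i) (hQpos i))), Finset.sum_div]
          rfl
        have hlog : (∑ i, f (x i) (y i)) ≤ (n:ℝ) * (I0 - δ) := by
          rw [hsum]
          calc Real.logb 2 (∏ i, W (x i) (y i) / ((1/q) * ∑ x', W x' (y i)))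
              ≤ Real.logb 2 ((2:ℝ) ^ ((n:ℝ) * (I0 - δ))) :=
                Real.logb_le_logb_of_le one_lt_two hprodpos hratio
            _ = (n:ℝ) * (I0 - δ) := Real.logb_rpow two_pos (by norm_num)
        have hnd : (0:ℝ) < (n:ℝ) * δ := by positivity
        have hd : ((∑ i, f (x i) (y i)) - (n:ℝ) * I0) ≤ -((n:ℝ) * δ) := by
          have : (n:ℝ) * (I0 - δ) - (n:ℝ) * I0 = -((n:ℝ) * δ) := by ring
          linarith
        have h1le : (1:ℝ) ≤ (((∑ i, f (x i) (y i)) - (n:ℝ) * I0) / ((n:ℝ) * δ))^2 := by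
          rw [div_pow, le_div_iff₀ (by positivity)]
          nlinarith
        calc (∏ i, (1/q) * W (x i) (y i)) * 1 = ∏ i, (1/q) * W (x i) (y i) := mul_one _
          _ ≤ _ := le_mul_of_one_le_right hPn0 h1le
    · rw [if_neg hc]
      have : (0:ℝ) ≤ (∏ i, (1/q) * W (x i) (y i)) *
          (((∑ i, f (x i) (y i)) - (n:ℝ) * I0) / ((n:ℝ) * δ))^2 := by positivity
      simpa using this
  calc ∑ x : Fin n → X, ∑ y : Fin n → Y,
        (∏ i, (1/q) * W (x i) (y i)) *
        (if (∏ i, W (x i) (y i)) ≤ ((2:ℝ) ^ ((n:ℝ) * (I0 - δ))) *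
            ∏ i, ((1/q) * ∑ x', W x' (y i)) then 1 else 0)
      ≤ ∑ x : Fin n → X, ∑ y : Fin n → Y,
        (∏ i, (1/q) * W (x i) (y i)) *
        (((∑ i, f (x i) (y i)) - (n:ℝ) * I0) / ((n:ℝ) * δ))^2 :=
        Finset.sum_le_sum fun x _ => Finset.sum_le_sum fun y _ => hpoint x y
    _ = (∑ x : Fin n → X, ∑ y : Fin n → Y,
        (∏ i, (1/q) * W (x i) (y i)) * ((∑ i, f (x i) (y i)) - (n:ℝ) * I0)^2)
        / ((n:ℝ) * δ)^2 := by
        rw [Finset.sum_div]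
        refine Finset.sum_congr rfl fun x _ => ?_
        rw [Finset.sum_div]
        refine Finset.sum_congr rfl fun y _ => ?_
        rw [div_pow, mul_div_assoc]
    _ = ((n:ℝ) * Vz) / ((n:ℝ) * δ)^2 := by rw [hvar2]
    _ = Vz / ((n:ℝ) * δ^2) := by
        have : (n:ℝ) ≠ 0 := ne_of_gt hn'
        field_simp
    _ = _ := by rw [hVd]

/-- For every discrete memoryless channel `(X, Y, W)` with finite input
alphabet `X` and finite output alphabet `Y`, the symmetric capacity `I⁰(W)` is achievable. -/
theorem symmetric_capacity_achievable
    {X Y : Type} [Fintype X] [Fintype Y] [Nonempty X] [DecidableEq Y]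
    (W : X → Y → ℝ)
    (hW0 : ∀ x y, 0 ≤ W x y) (hW1 : ∀ x, ∑ y, W x y = 1)
    (I0 : ℝ)
    (hI0 : I0 = ∑ x, ∑ y, (1 / (Fintype.card X : ℝ)) * W x y *
      Real.logb 2 (W x y / ((1 / (Fintype.card X : ℝ)) * ∑ x' : X, W x' y)))
    (ε : ℝ) (hε : 0 < ε) :
    ∃ n₀ : ℕ, ∀ n : ℕ, n₀ ≤ n →
      ∃ M : ℕ, 0 < M ∧
        ∃ (e : Fin M → (Fin n → X)) (d : (Fin n → Y) → Fin M),
          (1 / (n : ℝ)) * Real.logb 2 (M : ℝ) ≥ I0 - ε ∧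
          (1 / (M : ℝ)) * ∑ m : Fin M,
              ∑ y ∈ Finset.univ.filter (fun y : Fin n → Y => d y ≠ m),
                ∏ i, W (e m i) (y i) ≤ ε := by
  classical
  by_cases hIs : I0 ≤ ε / 2
  · -- trivial case: rate 0 suffices
    refine ⟨0, fun n _ => ⟨1, one_pos, fun _ _ => Classical.arbitrary X,
      fun _ => ⟨0, one_pos⟩, ?_, ?_⟩⟩
    · have h1 : Real.logb 2 ((1:ℕ) : ℝ) = 0 := by norm_num
      rw [h1, mul_zero]
      have h0 : I0 - ε ≤ 0 := by linarith
      exact h0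
    · have h0 : ∀ m : Fin 1, (⟨0, one_pos⟩ : Fin 1) = m := fun m => Subsingleton.elim _ _
      simp [h0, hε.le]
  · push_neg at hIs
    set δ : ℝ := ε / 4 with hδdef
    have hδ : 0 < δ := by positivity
    set Vd : ℝ := ∑ x, ∑ y, (1 / (Fintype.card X : ℝ)) * W x y *
        (Real.logb 2 (W x y / ((1 / (Fintype.card X : ℝ)) * ∑ x' : X, W x' y)) - I0)^2
      with hVddef
    -- the two vanishing error terms
    have ht1 : Filter.Tendsto (fun n : ℕ => Vd / ((n:ℝ) * δ^2)) Filter.atTop (nhds 0) := by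
      have h := tendsto_one_div_atTop_nhds_zero_nat.const_mul (Vd / δ^2)
      rw [mul_zero] at h
      refine h.congr fun n => ?_
      ring
    have ht2 : Filter.Tendsto (fun n : ℕ => 2 * (2:ℝ) ^ (-((n:ℝ) * δ))) Filter.atTop (nhds 0) := by
      have hr0 : (0:ℝ) ≤ (2:ℝ) ^ (-δ) := Real.rpow_nonneg (by norm_num) _
      have hr1 : (2:ℝ) ^ (-δ) < 1 :=
        Real.rpow_lt_one_of_one_lt_of_neg one_lt_two (by linarith)
      have hpow : ∀ n : ℕ, (2:ℝ) ^ (-((n:ℝ) * δ)) = ((2:ℝ) ^ (-δ))^n := by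
        intro n
        rw [← Real.rpow_natCast ((2:ℝ) ^ (-δ)) n, ← Real.rpow_mul (by norm_num)]
        ring_nf
      have h := (tendsto_pow_atTop_nhds_zero_of_lt_one hr0 hr1).const_mul 2
      rw [mul_zero] at h
      refine h.congr fun n => ?_
      rw [hpow n]
    have hT : Filter.Tendsto (fun n : ℕ => Vd / ((n:ℝ) * δ^2) + 2 * (2:ℝ) ^ (-((n:ℝ) * δ)))
        Filter.atTop (nhds 0) := by
      have := ht1.add ht2
      rwa [add_zero] at this
    have hev := hT.eventually_lt_const hε
    obtain ⟨N, hN⟩ := Filter.eventually_atTop.mp hev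
    refine ⟨max N 1, fun n hn => ?_⟩
    have hn1 : 1 ≤ n := le_trans (le_max_right N 1) hn
    have hnN : N ≤ n := le_trans (le_max_left N 1) hn
    have hn' : (0:ℝ) < (n:ℝ) := by exact_mod_cast hn1
    set t : ℝ := (2:ℝ) ^ ((n:ℝ) * (I0 - ε/2)) with htdef
    set γ : ℝ := (2:ℝ) ^ ((n:ℝ) * (I0 - δ)) with hγdef
    have hγpos : 0 < γ := Real.rpow_pos_of_pos (by norm_num) _
    have htpos : 0 < t := Real.rpow_pos_of_pos (by norm_num) _
    have ht1' : (1:ℝ) ≤ t := Real.one_le_rpow (by norm_num) (by nlinarith)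
    set M : ℕ := ⌈t⌉₊ with hMdef
    have hMpos : 0 < M := Nat.ceil_pos.mpr htpos
    have hMt : t ≤ (M:ℝ) := Nat.le_ceil t
    have hMt2 : (M:ℝ) ≤ 2 * t := by
      have := Nat.ceil_lt_add_one (le_of_lt htpos)
      have h2 : (M:ℝ) < t + 1 := this
      linarith
    obtain ⟨e, d, hed⟩ := exists_code W hW0 hW1 n M hMpos γ hγpos
    refine ⟨M, hMpos, e, d, ?_, ?_⟩
    · -- rate bound
      have hlog : (n:ℝ) * (I0 - ε/2) ≤ Real.logb 2 (M:ℝ) := by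
        calc (n:ℝ) * (I0 - ε/2) = Real.logb 2 t := (Real.logb_rpow two_pos (by norm_num)).symm
          _ ≤ Real.logb 2 (M:ℝ) := Real.logb_le_logb_of_le one_lt_two htpos hMt
      have : I0 - ε ≤ (1/(n:ℝ)) * ((n:ℝ) * (I0 - ε/2)) := by
        rw [one_div, inv_mul_cancel_left₀ (ne_of_gt hn')]
        linarith
      exact le_trans this (mul_le_mul_of_nonneg_left hlog (by positivity))
    · -- error bound
      have hpb := pbad_le W hW0 hW1 I0 hI0 δ hδ n hn1
      have hMγ : (M:ℝ) / γ ≤ 2 * (2:ℝ) ^ (-((n:ℝ) * δ)) := by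
        have hdiv : t / γ = (2:ℝ) ^ (-((n:ℝ) * δ)) := by
          rw [htdef, hγdef, ← Real.rpow_sub (by norm_num)]
          congr 1
          rw [hδdef]
          ring
        calc (M:ℝ) / γ ≤ (2 * t) / γ := by
              gcongr
          _ = 2 * (t / γ) := by ring
          _ = 2 * (2:ℝ) ^ (-((n:ℝ) * δ)) := by rw [hdiv]
      calc (1 / (M : ℝ)) * ∑ m : Fin M,
              ∑ y ∈ Finset.univ.filter (fun y : Fin n → Y => d y ≠ m),
                ∏ i, W (e m i) (y i)
          ≤ _ + (M:ℝ)/γ := hed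
        _ ≤ Vd / ((n:ℝ) * δ^2) + 2 * (2:ℝ) ^ (-((n:ℝ) * δ)) := by
            exact add_le_add hpb hMγ
        _ ≤ ε := le_of_lt (hN n hnN)
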